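/- arXiv:1808.07438 — 2 statements merged into one kernel-verified Lean document; each statement's English description precedes it below -/
import Mathlib

section
/- For integers k ≥ 2 and n ≥ 2k, the map sending i ∈ {0,…,n−1} (viewed as ℤ/nℤ) to ⌊2i/k⌋ viewed as an element of ℤ/⌈2n/k⌉ℤ is a graph homomorphism from the complement of the circular graph C_{k,n} to the complement of the cycle C_{⌈2n/k⌉}. -/
/-- Circular distance between two elements of `ZMod n`. -/
def cyclicDist (n : ℕ) (a b : ZMod n) : ℕ := min (a - b).val (b - a).val

/-- The circular graph `C_{k,n}` on `ZMod n`: distinct vertices are adjacent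
iff their circular distance is strictly less than `k`. -/
def circularGraph (k n : ℕ) : SimpleGraph (ZMod n) where
  Adj u v := u ≠ v ∧ cyclicDist n u v < k
  symm := by
    constructor
    rintro u v ⟨h1, h2⟩
    exact ⟨h1.symm, by simpa [cyclicDist, min_comm] using h2⟩
  loopless := by constructor; rintro u ⟨h, _⟩; exact h rfl

/-- The `d`-th strong product power of a graph. -/
def strongPower {V : Type*} (G : SimpleGraph V) (d : ℕ) : SimpleGraph (Fin d → V) where
  Adj x y := x ≠ y ∧ ∀ i, x i = y i ∨ G.Adj (x i) (y i)
  symm := by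
    constructor
    rintro x y ⟨h1, h2⟩
    exact ⟨h1.symm, fun i => (h2 i).imp Eq.symm (fun h => h.symm)⟩
  loopless := by constructor; rintro x ⟨h, _⟩; exact h rfl

/-- A set of vertices is independent if no two of its elements are adjacent. -/
def IsIndep {V : Type*} (G : SimpleGraph V) (s : Set V) : Prop :=
  ∀ u ∈ s, ∀ v ∈ s, u ≠ v → ¬ G.Adj u v

/-- The independence number of a graph on a finite vertex set. -/
noncomputable def alpha {V : Type*} [Fintype V] (G : SimpleGraph V) : ℕ :=
  sSup {m | ∃ s : Finset V, IsIndep G ↑s ∧ s.card = m}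

/-- The Shannon capacity of a graph. -/
noncomputable def shannonCapacity {V : Type*} [Fintype V] (G : SimpleGraph V) : ℝ :=
  ⨆ d : ℕ+, (alpha (strongPower G d) : ℝ) ^ ((1 : ℝ) / (d : ℝ))
lemma val_sub_val' {n : ℕ} [NeZero n] (u v : ZMod n) (h : v.val < u.val) :
    (u - v).val = u.val - v.val ∧ (v - u).val = n - (u.val - v.val) := by
  have ha : u.val < n := ZMod.val_lt u
  have h1 : ((u.val - v.val : ℕ) : ZMod n) = u - v := by
    rw [Nat.cast_sub h.le]
    simp [ZMod.natCast_val, ZMod.cast_id]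
  constructor
  · rw [← h1, ZMod.val_natCast, Nat.mod_eq_of_lt (by omega)]
  · have h2 : ((n - (u.val - v.val) : ℕ) : ZMod n) = v - u := by
      rw [Nat.cast_sub (by omega : u.val - v.val ≤ n), h1, ZMod.natCast_self]
      ring
    rw [← h2, ZMod.val_natCast, Nat.mod_eq_of_lt (by omega)]

lemma natlem (k n a b : ℕ) (hk : 2 ≤ k) (hn : 2 * k ≤ n) (ha : a < n) (hba : b < a)
    (hd1 : k ≤ a - b) (hd2 : k ≤ n - (a - b)) :
    2 * b / k + 2 ≤ 2 * a / k ∧ 2 * a / k + 2 ≤ 2 * b / k + (2 * n + k - 1) / k ∧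
      2 * a / k < (2 * n + k - 1) / k ∧ 4 ≤ (2 * n + k - 1) / k := by
  have hk0 : 0 < k := by omega
  have hdm := Nat.div_add_mod (2 * n + k - 1) k
  have hmod := Nat.mod_lt (2 * n + k - 1) hk0
  have hdm' := Nat.div_add_mod' (2 * n + k - 1) k
  have hkm : 2 * n ≤ ((2 * n + k - 1) / k) * k := by omega
  refine ⟨?_, ?_, ?_, ?_⟩
  · have h1 : (2 * b + 2 * k) / k ≤ 2 * a / k := Nat.div_le_div_right (by omega)
    rwa [Nat.add_mul_div_right _ _ hk0] at h1
  · have h1 : (2 * a + 2 * k) / k ≤ (2 * b + ((2 * n + k - 1) / k) * k) / k :=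
      Nat.div_le_div_right (by omega)
    rwa [Nat.add_mul_div_right _ _ hk0, Nat.add_mul_div_right _ _ hk0] at h1
  · have h1 : (2 * a + 1 * k) / k ≤ (2 * n + k - 1) / k := Nat.div_le_div_right (by omega)
    rw [Nat.add_mul_div_right _ _ hk0] at h1
    omega
  · have h4 : k * 4 ≤ k * ((2 * n + k - 1) / k) := by omega
    exact Nat.le_of_mul_le_mul_left h4 hk0

lemma main_aux (k n : ℕ) (hk : 2 ≤ k) (hn : 2 * k ≤ n) (u v : ZMod n)
    (hba : v.val < u.val)
    (hd1 : k ≤ (u - v).val) (hd2 : k ≤ (v - u).val) :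
    (circularGraph 2 ((2 * n + k - 1) / k))ᶜ.Adj
      ((2 * u.val / k : ℕ) : ZMod ((2 * n + k - 1) / k))
      ((2 * v.val / k : ℕ) : ZMod ((2 * n + k - 1) / k)) := by
  haveI : NeZero n := ⟨by omega⟩
  have ha : u.val < n := ZMod.val_lt u
  obtain ⟨e1, e2⟩ := val_sub_val' u v hba
  rw [e1] at hd1
  rw [e2] at hd2
  obtain ⟨hq21, hq2m, hq2lt, hm4⟩ := natlem k n u.val v.val hk hn ha hba hd1 hd2
  set m := (2 * n + k - 1) / k with hm
  set q1 := 2 * v.val / k with hq1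
  set q2 := 2 * u.val / k with hq2
  have hq1lt : q1 < m := by omega
  haveI : NeZero m := ⟨by omega⟩
  have hx : ((q2 : ℕ) : ZMod m).val = q2 := by
    rw [ZMod.val_natCast, Nat.mod_eq_of_lt hq2lt]
  have hy : ((q1 : ℕ) : ZMod m).val = q1 := by
    rw [ZMod.val_natCast, Nat.mod_eq_of_lt hq1lt]
  rw [SimpleGraph.compl_adj]
  have hne : ((q2 : ℕ) : ZMod m) ≠ ((q1 : ℕ) : ZMod m) := by
    intro heq
    have := congrArg ZMod.val heq
    rw [hx, hy] at this
    omega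
  refine ⟨hne, ?_⟩
  rintro ⟨-, hlt⟩
  obtain ⟨f1, f2⟩ := val_sub_val' ((q2 : ℕ) : ZMod m) ((q1 : ℕ) : ZMod m) (by rw [hx, hy]; omega)
  rw [hx, hy] at f1 f2
  unfold cyclicDist at hlt
  rw [f1, f2] at hlt
  omega

theorem stmt5 (k n : ℕ) (hk : 2 ≤ k) (hn : 2 * k ≤ n) (u v : ZMod n)
    (h : (circularGraph k n)ᶜ.Adj u v) :
    (circularGraph 2 ((2 * n + k - 1) / k))ᶜ.Adj
      ((2 * u.val / k : ℕ) : ZMod ((2 * n + k - 1) / k))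
      ((2 * v.val / k : ℕ) : ZMod ((2 * n + k - 1) / k)) := by
  rw [SimpleGraph.compl_adj] at h
  obtain ⟨hne, hnadj⟩ := h
  have hd : k ≤ cyclicDist n u v := by
    by_contra hcon
    exact hnadj ⟨hne, by omega⟩
  unfold cyclicDist at hd
  have hd1 : k ≤ (u - v).val := le_trans hd (min_le_left _ _)
  have hd2 : k ≤ (v - u).val := le_trans hd (min_le_right _ _)
  rcases lt_trichotomy v.val u.val with hba | heq | hab
  · exact main_aux k n hk hn u v hba hd1 hd2
  · exfalso
    haveI : NeZero n := ⟨by omega⟩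
    exact hne (ZMod.val_injective _ heq.symm)
  · exact (main_aux k n hk hn v u hab hd2 hd1).symm
end

section
/- For the 7-cycle C₇, the independence number of the second strong product power satisfies α(C₇²) = 10. -/
instance (k n : ℕ) : DecidableRel (circularGraph k n).Adj :=
  fun u v => inferInstanceAs (Decidable (u ≠ v ∧ cyclicDist n u v < k))

instance {V : Type*} [DecidableEq V] (G : SimpleGraph V) [DecidableRel G.Adj] (d : ℕ) :
    DecidableRel (strongPower G d).Adj :=
  fun x y => inferInstanceAs (Decidable (x ≠ y ∧ ∀ i, x i = y i ∨ G.Adj (x i) (y i)))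

set_option maxRecDepth 4000 in
lemma row_bound : ∀ T : Finset (ZMod 7),
    (∀ a ∈ T, ∀ b ∈ T, a ≠ b → 2 ≤ cyclicDist 7 a b) → T.card ≤ 3 := by decide

lemma adj_succ : ∀ i : ZMod 7, (circularGraph 2 7).Adj i (i+1) := by decide

lemma coord0_lem (i : ZMod 7) (x y : Fin 2 → ZMod 7)
    (hx : x 0 = i ∨ x 0 = i + 1) (hy : y 0 = i ∨ y 0 = i + 1) :
    x 0 = y 0 ∨ (circularGraph 2 7).Adj (x 0) (y 0) := by
  rcases hx with h1 | h1 <;> rcases hy with h2 | h2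
  · left; rw [h1, h2]
  · right; rw [h1, h2]; exact adj_succ i
  · right; rw [h1, h2]; exact (adj_succ i).symm
  · left; rw [h1, h2]

lemma double_row (s : Finset (Fin 2 → ZMod 7))
    (h : IsIndep (strongPower (circularGraph 2 7) 2) ↑s) (i : ZMod 7) :
    (s.filter (fun x => x 0 = i)).card + (s.filter (fun x => x 0 = i + 1)).card ≤ 3 := by
  classical
  set U : Finset (Fin 2 → ZMod 7) := s.filter (fun x => x 0 = i ∨ x 0 = i + 1) with hU
  -- membership facts
  have hmem : ∀ x ∈ U, x ∈ s ∧ (x 0 = i ∨ x 0 = i + 1) := by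
    intro x hx; simpa [hU] using Finset.mem_filter.mp hx
  -- injectivity of second coordinate on U
  have hinj : ∀ x ∈ U, ∀ y ∈ U, x 1 = y 1 → x = y := by
    intro x hx y hy h1
    by_contra hxy
    obtain ⟨hxs, hx0⟩ := hmem x hx
    obtain ⟨hys, hy0⟩ := hmem y hy
    have hc0 : x 0 = y 0 ∨ (circularGraph 2 7).Adj (x 0) (y 0) := coord0_lem i x y hx0 hy0
    apply h x (Finset.mem_coe.mpr hxs) y (Finset.mem_coe.mpr hys) hxy
    refine ⟨hxy, fun j => ?_⟩
    fin_cases j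
    · exact hc0
    · exact Or.inl h1
  -- the image satisfies the distance condition
  have himg : ∀ a ∈ U.image (fun x => x 1), ∀ b ∈ U.image (fun x => x 1),
      a ≠ b → 2 ≤ cyclicDist 7 a b := by
    intro a ha b hb hab
    obtain ⟨x, hx, rfl⟩ := Finset.mem_image.mp ha
    obtain ⟨y, hy, rfl⟩ := Finset.mem_image.mp hb
    have hxy : x ≠ y := fun e => hab (by rw [e])
    obtain ⟨hxs, hx0⟩ := hmem x hx
    obtain ⟨hys, hy0⟩ := hmem y hy
    by_contra hlt
    have hd : cyclicDist 7 (x 1) (y 1) < 2 := by omega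
    apply h x (Finset.mem_coe.mpr hxs) y (Finset.mem_coe.mpr hys) hxy
    refine ⟨hxy, fun j => ?_⟩
    fin_cases j
    · exact coord0_lem i x y hx0 hy0
    · exact Or.inr ⟨hab, hd⟩
  have hcard3 : U.card ≤ 3 := by
    have := row_bound (U.image (fun x => x 1)) himg
    rwa [Finset.card_image_of_injOn (fun x hx y hy => hinj x hx y hy)] at this
  have hsplit : U.card = (s.filter (fun x => x 0 = i)).card
      + (s.filter (fun x => x 0 = i + 1)).card := by
    rw [hU, Finset.filter_or]
    refine Finset.card_union_of_disjoint ?_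
    refine Finset.disjoint_filter_filter' _ _ ?_
    intro p hp1 hp2 x hx
    have h1 := hp1 x hx
    have h2 := hp2 x hx
    simp only at h1 h2
    have hii : i = i + 1 := h1.symm.trans h2
    exact absurd (left_eq_add.mp hii) (by decide)
  rw [← hsplit]; exact hcard3

lemma upper (s : Finset (Fin 2 → ZMod 7))
    (h : IsIndep (strongPower (circularGraph 2 7) 2) ↑s) : s.card ≤ 10 := by
  classical
  have hsum : ∑ i : ZMod 7, (s.filter (fun x => x 0 = i)).card = s.card :=
    (Finset.card_eq_sum_card_fiberwise (fun x _ => Finset.mem_univ (x 0))).symm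
  have hsum2 : ∑ i : ZMod 7, (s.filter (fun x => x 0 = i + 1)).card = s.card := by
    rw [← hsum]
    exact Fintype.sum_equiv (Equiv.addRight (1 : ZMod 7)) _ _ (fun i => rfl)
  have hle : ∑ i : ZMod 7, ((s.filter (fun x => x 0 = i)).card
      + (s.filter (fun x => x 0 = i + 1)).card) ≤ ∑ _i : ZMod 7, 3 :=
    Finset.sum_le_sum (fun i _ => double_row s h i)
  rw [Finset.sum_add_distrib, hsum, hsum2] at hle
  have h21 : (∑ _i : ZMod 7, 3) = 21 := by
    rw [Finset.sum_const, Finset.card_univ, ZMod.card]; rfl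
  rw [h21] at hle
  clear hsum hsum2 h
  omega

def S10 : Finset (Fin 2 → ZMod 7) :=
  {![0,5], ![1,1], ![1,3], ![2,6], ![3,2], ![3,4], ![4,0], ![5,2], ![5,5], ![6,0]}

lemma S10_indep : ∀ u ∈ S10, ∀ v ∈ S10, u ≠ v →
    ¬ (strongPower (circularGraph 2 7) 2).Adj u v := by decide

lemma S10_card : S10.card = 10 := by decide

theorem stmt19 : alpha (strongPower (circularGraph 2 7) 2) = 10 := by
  have hmem : (10 : ℕ) ∈ {m | ∃ s : Finset (Fin 2 → ZMod 7),
      IsIndep (strongPower (circularGraph 2 7) 2) ↑s ∧ s.card = m} := by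
    refine ⟨S10, ?_, S10_card⟩
    intro u hu v hv huv
    exact S10_indep u (Finset.mem_coe.mp hu) v (Finset.mem_coe.mp hv) huv
  have hub : ∀ m ∈ {m | ∃ s : Finset (Fin 2 → ZMod 7),
      IsIndep (strongPower (circularGraph 2 7) 2) ↑s ∧ s.card = m}, m ≤ 10 := by
    rintro m ⟨s, hs, rfl⟩
    exact upper s hs
  exact le_antisymm (csSup_le ⟨10, hmem⟩ hub) (le_csSup ⟨10, hub⟩ hmem)
end
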